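/- Let A = [[η, -1], [1, 0]] with |η| > Λ for a sufficiently large absolute constant Λ, and let C = {(x,y) ∈ ℝ² : x ≠ 0, |y| ≤ ε|x|} for a suitable small absolute constant ε > 0. Then for every X ∈ C, the vector A·X lies in C and ‖A·X‖ ≥ (2/3)|η|·‖X‖. -/

import Mathlib

open Real

noncomputable def vnorm (x : Fin 2 → ℝ) : ℝ := Real.sqrt (x 0 ^ 2 + x 1 ^ 2)

/-- There exist absolute constants `ε ∈ (0,1)` and `Λ > 0` such that for every
`η` with `|η| > Λ`, the matrix `A = [[η, -1], [1, 0]]` maps the cone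
`C = {(x,y) : x ≠ 0, |y| ≤ ε |x|}` into itself and expands norms by at least `(2/3)|η|`. -/
theorem stmt_0 :
    ∃ ε : ℝ, 0 < ε ∧ ε < 1 ∧ ∃ Λ : ℝ, 0 < Λ ∧
      ∀ η : ℝ, |η| > Λ →
        ∀ X : Fin 2 → ℝ, X 0 ≠ 0 → |X 1| ≤ ε * |X 0| →
          (((!![η, -1; 1, 0] : Matrix (Fin 2) (Fin 2) ℝ).mulVec X) 0 ≠ 0 ∧
            |((!![η, -1; 1, 0] : Matrix (Fin 2) (Fin 2) ℝ).mulVec X) 1| ≤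
              ε * |((!![η, -1; 1, 0] : Matrix (Fin 2) (Fin 2) ℝ).mulVec X) 0| ∧
            vnorm ((!![η, -1; 1, 0] : Matrix (Fin 2) (Fin 2) ℝ).mulVec X) ≥
              (2 / 3) * |η| * vnorm X) := by
  refine ⟨1/2, by norm_num, by norm_num, 10, by norm_num, ?_⟩
  intro η hη X hx0 hy
  set x := X 0 with hxdef
  set y := X 1 with hydef
  have hm0 : ((!![η, -1; 1, 0] : Matrix (Fin 2) (Fin 2) ℝ).mulVec X) 0 = η * x - y := by
    simp [Matrix.mulVec, dotProduct, Fin.sum_univ_two]; ring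
  have hm1 : ((!![η, -1; 1, 0] : Matrix (Fin 2) (Fin 2) ℝ).mulVec X) 1 = x := by
    simp [Matrix.mulVec, dotProduct, Fin.sum_univ_two, x]
  have hu : (0:ℝ) < |x| := abs_pos.mpr hx0
  have hh : (10:ℝ) < |η| := hη
  have key : |η| * |x| - |y| ≤ |η * x - y| := by
    have := abs_sub_abs_le_abs_sub (η * x) y
    rwa [abs_mul] at this
  have hbig : |η| * |x| - |y| > 0 := by nlinarith
  have h0 : η * x - y ≠ 0 := by
    intro h
    rw [h, abs_zero] at key
    linarith
  refine ⟨by rw [hm0]; exact h0, ?_, ?_⟩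
  · rw [hm0, hm1]
    nlinarith [key, abs_nonneg y]
  · unfold vnorm
    rw [hm0, hm1, hxdef, hydef]
    have h1 : Real.sqrt ((η * x - y) ^ 2 + x ^ 2) ≥ |η * x - y| := by
      rw [← Real.sqrt_sq_eq_abs]
      exact Real.sqrt_le_sqrt (by nlinarith [sq_nonneg x])
    have h2 : 2 / 3 * |η| * Real.sqrt (x ^ 2 + y ^ 2) ≤ |η| * |x| - |y| := by
      have hs : Real.sqrt (x ^ 2 + y ^ 2) ≤ Real.sqrt ((5/4) * x ^ 2) := by
        apply Real.sqrt_le_sqrt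
        nlinarith [abs_nonneg y, sq_abs x, sq_abs y]
      have hs2 : Real.sqrt ((5/4) * x ^ 2) ^ 2 = (5/4) * x ^ 2 := by
        rw [Real.sq_sqrt]; positivity
      have hsnn : Real.sqrt ((5/4) * x ^ 2) ≥ 0 := Real.sqrt_nonneg _
      have hle : 2 / 3 * |η| * Real.sqrt (x ^ 2 + y ^ 2) ≤
          2 / 3 * |η| * Real.sqrt ((5/4) * x ^ 2) := by
        apply mul_le_mul_of_nonneg_left hs (by positivity)
      refine hle.trans ?_
      nlinarith [sq_abs x, abs_nonneg y, sq_nonneg (Real.sqrt ((5/4)*x^2) - |x|),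
        sq_nonneg (|η| * |x| - |y|)]
    linarith [key.trans h1, h2]
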